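/- arXiv:0906.2385 — 3 statements merged into one kernel-verified Lean document; each statement's English description precedes it below -/
import Mathlib

section
/- Let A, B be elements of an associative (noncommutative) ring such that C := B*A - A*B commutes with both A and B. Then for every natural number n, (A + B)^n = Σ_{k=0}^{⌊n/2⌋} Σ_{m=0}^{n-2k} ((2k)!/(2^k k!)) * binomial(n, 2k) * binomial(n-2k, m) * C^k * A^{n-2k-m} * B^m. -/
open Finset

set_option maxHeartbeats 1000000

noncomputable def cc (n k m : ℕ) : ℚ :=
  if 2*k+m ≤ n then
    (n.factorial : ℚ) /
      (2^k * (k.factorial : ℚ) * (m.factorial : ℚ) * ((n - (2*k+m)).factorial : ℚ))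
  else 0

noncomputable def dd (k m j : ℕ) : ℚ :=
  ((2*k+m+j).factorial : ℚ) /
    (2^k * (k.factorial : ℚ) * (m.factorial : ℚ) * (j.factorial : ℚ))

lemma cc_of_gt {n k m : ℕ} (h : n < 2*k+m) : cc n k m = 0 := if_neg (by omega)

lemma cc_eq_dd {n k m j : ℕ} (h : n = 2*k+m+j) : cc n k m = dd k m j := by
  subst h
  have e : 2*k+m+j - (2*k+m) = j := by omega
  rw [cc, if_pos (by omega), e, dd]

lemma fact1 : ∀ a : ℕ, ((a+1).factorial : ℚ) = (a+1) * a.factorial := by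
  intro a; rw [Nat.factorial_succ]; push_cast; ring

lemma dd_rec (k m j : ℕ) (h0 : 2*k+m+j ≠ 0) :
    dd k m j = (if j = 0 then 0 else dd k m (j-1)) + (if m = 0 then 0 else dd k (m-1) j)
      + (if k = 0 then 0 else ((j+1 : ℕ) : ℚ) * dd (k-1) m (j+1)) := by
  rcases k with _ | k <;> rcases m with _ | m <;> rcases j with _ | j <;>
      simp only [if_pos rfl, if_neg (Nat.succ_ne_zero _), Nat.add_sub_cancel,
        add_zero, zero_add] <;>
      simp only [dd]
  · omega
  · rw [show 2*0+0+(j+1) = j+1 from by ring, show 2*0+0+j = j from by ring, fact1 j]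
    push_cast; field_simp; simp
  · rw [show 2*0+(m+1)+0 = m+1 from by ring, show 2*0+m+0 = m from by ring, fact1 m]
    push_cast; field_simp; simp
  · rw [show 2*0+(m+1)+(j+1) = (m+j+1)+1 from by ring,
      show 2*0+(m+1)+j = m+j+1 from by ring,
      show 2*0+m+(j+1) = m+j+1 from by ring,
      fact1 (m+j+1), fact1 m, fact1 j]
    push_cast; field_simp; ring
  · rw [show 2*(k+1)+0+0 = (2*k+1)+1 from by ring,
      show 2*k+0+(0+1) = 2*k+1 from by ring, fact1 (2*k+1), fact1 k, pow_succ]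
    push_cast; field_simp; ring
  · rw [show 2*(k+1)+0+(j+1) = (2*k+j+2)+1 from by ring,
      show 2*(k+1)+0+j = 2*k+j+2 from by ring,
      show 2*k+0+(j+1+1) = 2*k+j+2 from by ring,
      show (j+1+1 : ℕ) = (j+1)+1 from rfl,
      fact1 (2*k+j+2), fact1 (j+1), fact1 k, fact1 j, pow_succ]
    push_cast; field_simp; ring
  · rw [show 2*(k+1)+(m+1)+0 = (2*k+m+2)+1 from by ring,
      show 2*(k+1)+m+0 = 2*k+m+2 from by ring,
      show 2*k+(m+1)+(0+1) = 2*k+m+2 from by ring,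
      fact1 (2*k+m+2), fact1 k, fact1 m, pow_succ]
    push_cast; field_simp; ring
  · rw [show 2*(k+1)+(m+1)+(j+1) = (2*k+m+j+3)+1 from by ring,
      show 2*(k+1)+(m+1)+j = 2*k+m+j+3 from by ring,
      show 2*(k+1)+m+(j+1) = 2*k+m+j+3 from by ring,
      show 2*k+(m+1)+(j+1+1) = 2*k+m+j+3 from by ring,
      show (j+1+1 : ℕ) = (j+1)+1 from rfl,
      fact1 (2*k+m+j+3), fact1 (j+1), fact1 k, fact1 m, fact1 j, pow_succ]
    push_cast; field_simp; ring

lemma cc_rec (n k m : ℕ) :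
    cc (n+1) k m = cc n k m + (if m = 0 then 0 else cc n k (m-1)) +
      (if k = 0 then 0 else ((n - (2*(k-1)+m) : ℕ) : ℚ) * cc n (k-1) m) := by
  rcases Nat.lt_or_ge (n+1) (2*k+m) with h | h
  · -- 2k+m ≥ n+2 : everything vanishes
    rw [cc_of_gt (by omega), cc_of_gt (by omega)]
    have h2 : (if m = 0 then (0:ℚ) else cc n k (m-1)) = 0 := by
      rcases Nat.eq_zero_or_pos m with hm | hm
      · simp [hm]
      · rw [if_neg (by omega), cc_of_gt (by omega)]
    rw [h2]
    rcases Nat.eq_zero_or_pos k with hk | hk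
    · simp [hk]
    · rw [if_neg (by omega)]
      rcases Nat.lt_or_ge n (2*(k-1)+m) with h3 | h3
      · rw [cc_of_gt h3]; ring
      · have e : n - (2*(k-1)+m) = 0 := by omega
        rw [e]; push_cast; ring
  · -- n+1 = 2k+m+j
    obtain ⟨j, hj⟩ := Nat.le.dest h
    rw [cc_eq_dd (show n+1 = 2*k+m+j by omega)]
    have t1 : cc n k m = (if j = 0 then 0 else dd k m (j-1)) := by
      rcases Nat.eq_zero_or_pos j with hj0 | hj0
      · rw [if_pos hj0, cc_of_gt (by omega)]
      · rw [if_neg (by omega), cc_eq_dd (show n = 2*k+m+(j-1) by omega)]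
    have t2 : (if m = 0 then (0:ℚ) else cc n k (m-1)) =
        (if m = 0 then (0:ℚ) else dd k (m-1) j) := by
      rcases Nat.eq_zero_or_pos m with hm | hm
      · simp [hm]
      · rw [if_neg (by omega), if_neg (by omega),
          cc_eq_dd (show n = 2*k+(m-1)+j by omega)]
    have t3 : (if k = 0 then (0:ℚ) else ((n - (2*(k-1)+m) : ℕ) : ℚ) * cc n (k-1) m) =
        (if k = 0 then (0:ℚ) else ((j+1 : ℕ) : ℚ) * dd (k-1) m (j+1)) := by
      rcases Nat.eq_zero_or_pos k with hk | hk
      · simp [hk]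
      · rw [if_neg (by omega), if_neg (by omega),
          cc_eq_dd (show n = 2*(k-1)+m+(j+1) by omega),
          show n - (2*(k-1)+m) = j+1 by omega]
    rw [t1, t2, t3]
    exact dd_rec k m j (by omega)

section RingLemmas

variable {R : Type*} [Ring R] (A B : R)

lemma BA_pow (hCA : (B*A-A*B) * A = A * (B*A-A*B)) :
    ∀ i : ℕ, B * A^i = A^i * B + i • ((B*A-A*B) * A^(i-1)) := by
  set C := B*A - A*B with hC
  have hBA : B * A = A * B + C := by rw [hC]; abel
  have hc : ∀ p : ℕ, C * A^p = A^p * C := fun p => Commute.pow_right hCA p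
  intro i
  induction i with
  | zero => simp
  | succ i ih =>
    rcases i with _ | i
    · simpa using hBA
    · rw [pow_succ, ← mul_assoc, ih, add_mul, smul_mul_assoc,
        mul_assoc C _ A, show (i+1)-1 = i from rfl, show (i+1+1)-1 = i+1 from rfl,
        ← pow_succ, mul_assoc, hBA, mul_add, ← mul_assoc, ← pow_succ, ← hc (i+1),
        succ_nsmul (C * A^(i+1)) (i+1)]
      abel

lemma mulA (hCA : (B*A-A*B) * A = A * (B*A-A*B)) (k i m : ℕ) :
    A * ((B*A-A*B)^k * A^i * B^m) = (B*A-A*B)^k * A^(i+1) * B^m := by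
  have hA : A * (B*A-A*B)^k = (B*A-A*B)^k * A := Commute.pow_right hCA.symm k
  calc A * ((B*A-A*B)^k * A^i * B^m)
      = (A * (B*A-A*B)^k) * A^i * B^m := by simp only [mul_assoc]
    _ = ((B*A-A*B)^k * A) * A^i * B^m := by rw [hA]
    _ = (B*A-A*B)^k * A^(i+1) * B^m := by rw [mul_assoc _ A, ← pow_succ']

lemma mulB (hCA : (B*A-A*B) * A = A * (B*A-A*B))
    (hCB : (B*A-A*B) * B = B * (B*A-A*B)) (k i m : ℕ) :
    B * ((B*A-A*B)^k * A^i * B^m) =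
      (B*A-A*B)^k * A^i * B^(m+1) + i • ((B*A-A*B)^(k+1) * A^(i-1) * B^m) := by
  have hB : B * (B*A-A*B)^k = (B*A-A*B)^k * B := Commute.pow_right hCB.symm k
  calc B * ((B*A-A*B)^k * A^i * B^m)
      = (B * (B*A-A*B)^k) * A^i * B^m := by simp only [mul_assoc]
    _ = (B*A-A*B)^k * (B * A^i) * B^m := by rw [hB, mul_assoc _ B]
    _ = (B*A-A*B)^k * (A^i * B + i • ((B*A-A*B) * A^(i-1))) * B^m := by
        rw [BA_pow A B hCA i]
    _ = (B*A-A*B)^k * A^i * B^(m+1) + i • ((B*A-A*B)^(k+1) * A^(i-1) * B^m) := by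
        rw [mul_add, add_mul, mul_smul_comm, smul_mul_assoc]
        congr 1
        · rw [mul_assoc, mul_assoc, mul_assoc, ← pow_succ']
        · rw [← mul_assoc, ← pow_succ]

end RingLemmas

theorem key {R : Type*} [Ring R] [Algebra ℚ R] (A B : R)
    (hCA : (B * A - A * B) * A = A * (B * A - A * B))
    (hCB : (B * A - A * B) * B = B * (B * A - A * B)) (n : ℕ) :
    (A + B) ^ n = ∑ k ∈ range (n+1), ∑ m ∈ range (n+1),
      cc n k m • ((B*A-A*B)^k * A^(n-(2*k+m)) * B^m) := by
  induction n with
  | zero => simp [cc]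
  | succ n ih =>
    -- termwise expansion of the left side
    have LHS : (A+B)^(n+1) =
        (∑ k ∈ range (n+1), ∑ m ∈ range (n+1),
          cc n k m • ((B*A-A*B)^k * A^((n+1)-(2*k+m)) * B^m))
        + (∑ k ∈ range (n+1), ∑ m ∈ range (n+1),
          cc n k m • ((B*A-A*B)^k * A^((n+1)-(2*k+(m+1))) * B^(m+1)))
        + (∑ k ∈ range (n+1), ∑ m ∈ range (n+1),
          (cc n k m * ((n-(2*k+m) : ℕ) : ℚ)) •
            ((B*A-A*B)^(k+1) * A^((n+1)-(2*(k+1)+m)) * B^m)) := by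
      rw [pow_succ', ih, Finset.mul_sum]
      rw [← Finset.sum_add_distrib, ← Finset.sum_add_distrib]
      refine Finset.sum_congr rfl fun k _ => ?_
      rw [Finset.mul_sum, ← Finset.sum_add_distrib, ← Finset.sum_add_distrib]
      refine Finset.sum_congr rfl fun m _ => ?_
      rw [mul_smul_comm, add_mul, mulA A B hCA, mulB A B hCA hCB, smul_add, smul_add,
        ← add_assoc]
      congr 1
      · congr 1
        · -- A-piece : exponent shift
          by_cases h : 2*k+m ≤ n
          · rw [show n-(2*k+m)+1 = (n+1)-(2*k+m) from by omega]
          · rw [cc_of_gt (by omega), zero_smul, zero_smul]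
        · rw [show (n+1)-(2*k+(m+1)) = n-(2*k+m) from by omega]
      · rw [← Nat.cast_smul_eq_nsmul ℚ (n-(2*k+m)), smul_smul,
          show (n+1)-(2*(k+1)+m) = n-(2*k+m)-1 from by omega]
    rw [LHS]
    -- now massage the right side using cc_rec
    have RHS : (∑ k ∈ range (n+2), ∑ m ∈ range (n+2),
        cc (n+1) k m • ((B*A-A*B)^k * A^((n+1)-(2*k+m)) * B^m)) =
        (∑ k ∈ range (n+2), ∑ m ∈ range (n+2),
          cc n k m • ((B*A-A*B)^k * A^((n+1)-(2*k+m)) * B^m))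
        + (∑ k ∈ range (n+2), ∑ m ∈ range (n+2),
          (if m = 0 then 0 else cc n k (m-1)) •
            ((B*A-A*B)^k * A^((n+1)-(2*k+m)) * B^m))
        + (∑ k ∈ range (n+2), ∑ m ∈ range (n+2),
          (if k = 0 then 0 else ((n - (2*(k-1)+m) : ℕ) : ℚ) * cc n (k-1) m) •
            ((B*A-A*B)^k * A^((n+1)-(2*k+m)) * B^m)) := by
      rw [← Finset.sum_add_distrib, ← Finset.sum_add_distrib]
      refine Finset.sum_congr rfl fun k _ => ?_
      rw [← Finset.sum_add_distrib, ← Finset.sum_add_distrib]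
      refine Finset.sum_congr rfl fun m _ => ?_
      rw [cc_rec, add_smul, add_smul]
    rw [RHS]
    have E1 : (∑ k ∈ range (n+2), ∑ m ∈ range (n+2),
        cc n k m • ((B*A-A*B)^k * A^((n+1)-(2*k+m)) * B^m)) =
        ∑ k ∈ range (n+1), ∑ m ∈ range (n+1),
          cc n k m • ((B*A-A*B)^k * A^((n+1)-(2*k+m)) * B^m) := by
      refine ((Finset.sum_subset (Finset.range_subset_range.2 (by omega))
        (fun k _ hk => Finset.sum_eq_zero fun m _ => ?_)).symm.trans
        (Finset.sum_congr rfl fun k _ => ?_))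
      · rw [cc_of_gt (n := n) (k := k) (m := m)
            (by simp only [Finset.mem_range] at hk; omega), zero_smul]
      · exact (Finset.sum_subset (Finset.range_subset_range.2 (by omega))
          (fun m _ hm => by
            rw [cc_of_gt (n := n) (k := k) (m := m)
              (by simp only [Finset.mem_range] at hm; omega), zero_smul])).symm
    have E2 : (∑ k ∈ range (n+2), ∑ m ∈ range (n+2),
        (if m = 0 then (0:ℚ) else cc n k (m-1)) •
          ((B*A-A*B)^k * A^((n+1)-(2*k+m)) * B^m)) =
        ∑ k ∈ range (n+1), ∑ m ∈ range (n+1),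
          cc n k m • ((B*A-A*B)^k * A^((n+1)-(2*k+(m+1))) * B^(m+1)) := by
      have inner : ∀ k, (∑ m ∈ range (n+2),
          (if m = 0 then (0:ℚ) else cc n k (m-1)) •
            ((B*A-A*B)^k * A^((n+1)-(2*k+m)) * B^m)) =
          ∑ m ∈ range (n+1),
            cc n k m • ((B*A-A*B)^k * A^((n+1)-(2*k+(m+1))) * B^(m+1)) := by
        intro k
        rw [Finset.sum_range_succ']
        simp only [if_pos rfl, if_true, eq_self_iff_true, zero_smul, add_zero,
          if_neg (Nat.succ_ne_zero _), Nat.add_sub_cancel]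
      rw [Finset.sum_congr rfl fun k _ => inner k]
      refine (Finset.sum_subset (Finset.range_subset_range.2 (by omega))
        (fun k _ hk => Finset.sum_eq_zero fun m _ => ?_)).symm
      rw [cc_of_gt (n := n) (k := k) (m := m)
        (by simp only [Finset.mem_range] at hk; omega), zero_smul]
    have E3 : (∑ k ∈ range (n+2), ∑ m ∈ range (n+2),
        (if k = 0 then (0:ℚ) else ((n - (2*(k-1)+m) : ℕ) : ℚ) * cc n (k-1) m) •
          ((B*A-A*B)^k * A^((n+1)-(2*k+m)) * B^m)) =
        ∑ k ∈ range (n+1), ∑ m ∈ range (n+1),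
          (cc n k m * ((n-(2*k+m) : ℕ) : ℚ)) •
            ((B*A-A*B)^(k+1) * A^((n+1)-(2*(k+1)+m)) * B^m) := by
      rw [Finset.sum_range_succ']
      simp only [if_pos rfl, if_true, eq_self_iff_true, zero_smul,
        Finset.sum_const_zero, add_zero, if_neg (Nat.succ_ne_zero _),
        Nat.add_sub_cancel]
      refine Finset.sum_congr rfl fun k _ => ?_
      refine ((Finset.sum_subset (Finset.range_subset_range.2 (by omega))
        (fun m _ hm => ?_)).symm.trans (Finset.sum_congr rfl fun m _ => ?_))
      · rw [cc_of_gt (n := n) (k := k) (m := m)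
          (by simp only [Finset.mem_range] at hm; omega), mul_zero, zero_smul]
      · rw [mul_comm]
    rw [E1, E2, E3]


/-- If `C = B*A - A*B` commutes with `A` and `B`, then
`(A+B)^n = ∑_{k=0}^{⌊n/2⌋} ∑_{m=0}^{n-2k} ((2k)!/(2^k k!)) C(n,2k) C(n-2k,m)
  C^k A^{n-2k-m} B^m`. -/
theorem stmt_1 {R : Type*} [Ring R] [Algebra ℚ R] (A B : R)
    (hCA : (B * A - A * B) * A = A * (B * A - A * B))
    (hCB : (B * A - A * B) * B = B * (B * A - A * B)) (n : ℕ) :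
    (A + B) ^ n =
      ∑ k ∈ Finset.range (n / 2 + 1), ∑ m ∈ Finset.range (n - 2 * k + 1),
        ((((2 * k).factorial : ℚ) / (2 ^ k * (k.factorial : ℚ))) *
          (n.choose (2 * k) : ℚ) * ((n - 2 * k).choose m : ℚ)) •
          ((B * A - A * B) ^ k * A ^ (n - 2 * k - m) * B ^ m) := by
  have hcoef : ∀ k m : ℕ, 2*k+m ≤ n → cc n k m =
      (((2*k).factorial : ℚ) / (2^k * (k.factorial : ℚ))) *
        (n.choose (2*k) : ℚ) * ((n-2*k).choose m : ℚ) := by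
    intro k m h
    rw [cc, if_pos h, Nat.cast_choose ℚ (show 2*k ≤ n by omega),
      Nat.cast_choose ℚ (show m ≤ n-2*k by omega), Nat.sub_sub]
    have h1 : ((2*k).factorial : ℚ) ≠ 0 := by exact_mod_cast (2*k).factorial_ne_zero
    have h2 : ((n-2*k).factorial : ℚ) ≠ 0 := by
      exact_mod_cast (n-2*k).factorial_ne_zero
    field_simp
  rw [key A B hCA hCB n]
  refine ((Finset.sum_subset (Finset.range_subset_range.2 (by omega))
    (fun k _ hk => Finset.sum_eq_zero fun m _ => ?_)).symm.trans
    (Finset.sum_congr rfl fun k hk => ?_))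
  · rw [cc_of_gt (n := n) (k := k) (m := m)
      (by simp only [Finset.mem_range] at hk; omega), zero_smul]
  · simp only [Finset.mem_range] at hk
    refine ((Finset.sum_subset (Finset.range_subset_range.2 (by omega))
      (fun m _ hm => ?_)).symm.trans (Finset.sum_congr rfl fun m hm => ?_))
    · rw [cc_of_gt (n := n) (k := k) (m := m)
        (by simp only [Finset.mem_range] at hm; omega), zero_smul]
    · simp only [Finset.mem_range] at hm
      rw [hcoef k m (by omega), Nat.sub_sub]
end

section
/- Let A, B be n×n complex matrices such that the commutator C := B*A - A*B commutes with both A and B. Then exp(t(A+B)) = exp((t²/2) C) * exp(t A) * exp(t B) for all real t (the Baker–Campbell–Hausdorff formula for the Heisenberg algebra). -/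
open NormedSpace Set

section abstractBCH

variable {𝔸 : Type*} [NormedRing 𝔸] [NormedAlgebra ℝ 𝔸] [CompleteSpace 𝔸]

/-- Uniqueness for the linear ODE `f' = M * f` on a Banach algebra. -/
private lemma ode_unique_aux (M : 𝔸) {f g : ℝ → 𝔸}
    (hf : ∀ s, HasDerivAt f (M * f s) s)
    (hg : ∀ s, HasDerivAt g (M * g s) s)
    (h0 : f 0 = g 0) (t : ℝ) : f t = g t := by
  have hlip : LipschitzWith ‖ContinuousLinearMap.mul ℝ 𝔸 M‖₊ (fun x : 𝔸 => M * x) :=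
    (ContinuousLinearMap.mul ℝ 𝔸 M).lipschitz
  have hv : ∀ s : ℝ, LipschitzOnWith ‖ContinuousLinearMap.mul ℝ 𝔸 M‖₊
      ((fun (_ : ℝ) (x : 𝔸) => M * x) s) ((fun _ : ℝ => (univ : Set 𝔸)) s) := fun s =>
    hlip.lipschitzOnWith
  have hpos : (0:ℝ) < |t| + 1 := by positivity
  have ht0 : (0:ℝ) ∈ Ioo (-(|t| + 1)) (|t| + 1) := ⟨by linarith, hpos⟩
  have htt : t ∈ Ioo (-(|t| + 1)) (|t| + 1) :=
    ⟨by have := neg_abs_le t; linarith, by have := le_abs_self t; linarith⟩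
  exact ODE_solution_unique_of_mem_Ioo (fun s _ => hv s) ht0
    (fun s _ => ⟨hf s, mem_univ _⟩) (fun s _ => ⟨hg s, mem_univ _⟩) h0 htt

private lemma bch_aux (A B : 𝔸)
    (hCA : (B * A - A * B) * A = A * (B * A - A * B))
    (hCB : (B * A - A * B) * B = B * (B * A - A * B)) (t : ℝ) :
    exp (t • (A + B)) =
      exp ((t ^ 2 / 2) • (B * A - A * B)) * exp (t • A) * exp (t • B) := by
  set C : 𝔸 := B * A - A * B with hC
  -- commutation helpers
  have hca : ∀ X : 𝔸, C * (A * X) = A * (C * X) := fun X => by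
    rw [← mul_assoc, hCA, mul_assoc]
  have hab : ∀ X : 𝔸, A * (B * X) = B * (A * X) - C * X := fun X => by
    have h1 : C * X = B * (A * X) - A * (B * X) := by
      rw [hC, sub_mul, mul_assoc, mul_assoc]
    rw [h1]
    exact (sub_sub_cancel _ _).symm
  -- the exchange relation
  have hex : ∀ s : ℝ, exp (s • A) * B = (B - s • C) * exp (s • A) := by
    intro s
    refine ode_unique_aux A (f := fun u => exp (u • A) * B)
      (g := fun u => (B - u • C) * exp (u • A)) ?_ ?_ (by simp) s
    · intro u
      have h1 := (hasDerivAt_exp_smul_const' (𝕂 := ℝ) A u).mul_const B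
      simpa [mul_assoc] using h1
    · intro u
      have h1 : HasDerivAt (fun u : ℝ => B - u • C) (-C) u := by
        simpa using ((hasDerivAt_id u).smul_const C).const_sub B
      have h2 := h1.fun_mul (hasDerivAt_exp_smul_const' (𝕂 := ℝ) A u)
      convert h2 using 1
      simp only [sub_mul, smul_mul_assoc, mul_sub, mul_smul_comm, neg_mul, mul_assoc]
      rw [hab, hca]
      abel
  -- commuting exponentials
  have hAh : ∀ s : ℝ, A * exp (s • C) = exp (s • C) * A := fun s =>
    (((show Commute A C from hCA.symm).smul_right s).exp_right).eq
  have hBh : ∀ s : ℝ, B * exp (s • C) = exp (s • C) * B := fun s =>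
    (((show Commute B C from hCB.symm).smul_right s).exp_right).eq
  have hCh : ∀ s : ℝ, C * exp (s • C) = exp (s • C) * C := fun s =>
    (((Commute.refl C).smul_right s).exp_right).eq
  -- derivatives
  have hf : ∀ u : ℝ, HasDerivAt (fun u : ℝ => exp (u • (A + B)))
      ((A + B) * exp (u • (A + B))) u := fun u =>
    hasDerivAt_exp_smul_const' (𝕂 := ℝ) (A + B) u
  have hh : ∀ u : ℝ, HasDerivAt (fun u : ℝ => exp ((u ^ 2 / 2) • C))
      (u • (C * exp ((u ^ 2 / 2) • C))) u := by
    intro u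
    have h2 : HasDerivAt (fun v : ℝ => v ^ 2 / 2) u u := by
      have := (hasDerivAt_pow 2 u).div_const 2
      exact this.congr_deriv (by norm_num)
    have h1 := hasDerivAt_exp_smul_const' (𝕂 := ℝ) C (u ^ 2 / 2)
    have := h1.scomp u h2
    simpa [Function.comp_def] using this
  have hg : ∀ u : ℝ, HasDerivAt
      (fun u : ℝ => exp ((u ^ 2 / 2) • C) * exp (u • A) * exp (u • B))
      ((A + B) * (exp ((u ^ 2 / 2) • C) * exp (u • A) * exp (u • B))) u := by
    intro u
    have e2 := hasDerivAt_exp_smul_const' (𝕂 := ℝ) A u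
    have e3 := hasDerivAt_exp_smul_const' (𝕂 := ℝ) B u
    have h2 := ((hh u).fun_mul e2).fun_mul e3
    convert h2 using 1
    set H : 𝔸 := exp ((u ^ 2 / 2) • C)
    set Ea : 𝔸 := exp (u • A)
    set Eb : 𝔸 := exp (u • B)
    have hAH : ∀ X : 𝔸, A * (H * X) = H * (A * X) := fun X => by
      rw [← mul_assoc, hAh (u ^ 2 / 2), mul_assoc]
    have hBH : ∀ X : 𝔸, B * (H * X) = H * (B * X) := fun X => by
      rw [← mul_assoc, hBh (u ^ 2 / 2), mul_assoc]
    have hCH : ∀ X : 𝔸, C * (H * X) = H * (C * X) := fun X => by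
      rw [← mul_assoc, hCh (u ^ 2 / 2), mul_assoc]
    have hxb : Ea * (B * Eb) = B * (Ea * Eb) - u • (C * (Ea * Eb)) := by
      rw [← mul_assoc, hex u]
      simp only [sub_mul, smul_mul_assoc, mul_assoc]
      rfl
    simp only [add_mul, mul_add, smul_mul_assoc, mul_smul_comm, mul_assoc]
    rw [hxb, hAH, hBH, hCH]
    simp only [mul_sub, mul_smul_comm]
    abel
  have h0 : exp ((0:ℝ) • (A + B)) =
      exp (((0:ℝ) ^ 2 / 2) • C) * exp ((0:ℝ) • A) * exp ((0:ℝ) • B) := by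
    simp [exp_zero]
  exact ode_unique_aux (A + B) hf hg h0 t

end abstractBCH

/-- Baker–Campbell–Hausdorff for the Heisenberg algebra: if `C = B*A - A*B` commutes
with `A` and `B`, then `exp(t(A+B)) = exp((t²/2) C) * exp(t A) * exp(t B)`. -/
theorem stmt_2 {n : ℕ} (A B : Matrix (Fin n) (Fin n) ℂ)
    (hCA : (B * A - A * B) * A = A * (B * A - A * B))
    (hCB : (B * A - A * B) * B = B * (B * A - A * B)) (t : ℝ) :
    exp ((t : ℂ) • (A + B)) =
      exp (((t : ℂ) ^ 2 / 2) • (B * A - A * B)) * exp ((t : ℂ) • A) *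
        exp ((t : ℂ) • B) := by
  letI : SeminormedRing (Matrix (Fin n) (Fin n) ℂ) := Matrix.linftyOpSemiNormedRing
  letI : NormedRing (Matrix (Fin n) (Fin n) ℂ) := Matrix.linftyOpNormedRing
  letI : NormedAlgebra ℝ (Matrix (Fin n) (Fin n) ℂ) := Matrix.linftyOpNormedAlgebra
  have coe_smul : ∀ (r : ℝ) (X : Matrix (Fin n) (Fin n) ℂ), (r : ℂ) • X = r • X := by
    intro r X
    ext i j
    simp [Matrix.smul_apply, Complex.real_smul]
  have hsq : ((t : ℂ) ^ 2 / 2) = ((t ^ 2 / 2 : ℝ) : ℂ) := by push_cast; ring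
  rw [hsq, coe_smul, coe_smul, coe_smul]
  exact bch_aux A B hCA hCB t
end

section
/- For nonnegative integers α, β, γ, δ, the iterated integral I₁(α,β,γ,δ) = ∫₀¹ dτ₂ ∫₀^{τ₂} dτ₁ τ₁^α (1-τ₂)^β (τ₂-τ₁)^γ (1-τ₂+τ₁)^δ equals Γ(1+α)Γ(1+β)Γ(1+γ)Γ(2+α+β+δ) / (Γ(3+α+β+γ+δ) Γ(2+α+β)). -/
open Finset

lemma beta_complex (a c : ℕ) : Complex.betaIntegral (a+1) (c+1) =
    (a.factorial * c.factorial : ℝ) / (a+c+1).factorial := by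
  have h := Complex.Gamma_mul_Gamma_eq_betaIntegral (s := (a:ℂ)+1) (t := (c:ℂ)+1)
    (by simp; positivity) (by simp; positivity)
  have h1 : Complex.Gamma ((a:ℂ)+1) = a.factorial := Complex.Gamma_nat_eq_factorial a
  have h2 : Complex.Gamma ((c:ℂ)+1) = c.factorial := Complex.Gamma_nat_eq_factorial c
  have h3 : Complex.Gamma ((a:ℂ)+1+((c:ℂ)+1)) = (a+c+1).factorial := by
    rw [show (a:ℂ)+1+((c:ℂ)+1) = ((a+c+1:ℕ):ℂ)+1 by push_cast; ring]
    exact Complex.Gamma_nat_eq_factorial _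
  rw [h1, h2, h3] at h
  have hne : ((a+c+1).factorial : ℂ) ≠ 0 := by exact_mod_cast (a+c+1).factorial_ne_zero
  rw [eq_div_iff hne]
  push_cast
  linear_combination -h

lemma beta_scaled (a c : ℕ) {t : ℝ} (ht : 0 < t) :
    (∫ x in (0:ℝ)..t, x^a * (t-x)^c) =
      t^(a+c+1) * ((a.factorial * c.factorial : ℝ) / (a+c+1).factorial) := by
  have h := Complex.betaIntegral_scaled ((a:ℂ)+1) ((c:ℂ)+1) ht
  simp only [add_sub_cancel_right, Complex.cpow_natCast] at h
  have hL : (∫ x in (0:ℝ)..t, (x:ℂ)^a * ((t:ℂ)-x)^c)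
      = ((∫ x in (0:ℝ)..t, x^a * (t-x)^c : ℝ) : ℂ) := by
    rw [← intervalIntegral.integral_ofReal]
    congr 1; ext x; push_cast; ring
  rw [hL, beta_complex] at h
  have h4 : ((a:ℂ)+1+((c:ℂ)+1)-1) = ((a+c+1 : ℕ) : ℂ) := by push_cast; ring
  rw [h4, Complex.cpow_natCast] at h
  exact_mod_cast h
open Finset

lemma vander (a b d : ℕ) :
    ∑ k ∈ range (d+1), (a+k).choose k * (b + (d-k)).choose (d-k) = (a+b+d+1).choose d := by
  induction b generalizing d with
  | zero =>
    have h : ∀ k ∈ range (d+1), (a+k).choose k * (0 + (d-k)).choose (d-k) = (k+a).choose a := by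
      intro k hk
      rw [zero_add, Nat.choose_self, mul_one, add_comm, Nat.choose_symm_add]
    rw [sum_congr rfl h, Nat.sum_range_add_choose d a,
      Nat.choose_symm_of_eq_add (show d+a+1 = (a+1)+d by omega),
      show d+a+1 = a+0+d+1 by omega]
  | succ b ihb =>
    induction d with
    | zero => simp
    | succ d ihd =>
      have hsplit : ∀ k ∈ range (d+1),
          (a+k).choose k * ((b+1) + (d+1-k)).choose (d+1-k)
          = (a+k).choose k * ((b+1) + (d-k)).choose (d-k)
            + (a+k).choose k * (b + (d+1-k)).choose (d+1-k) := by
        intro k hk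
        rw [mem_range] at hk
        have h1 : d+1-k = (d-k)+1 := by omega
        have h2 : (b+1)+(d+1-k) = ((b+1)+(d-k))+1 := by omega
        rw [h2, h1, Nat.choose_succ_succ',
          show b+((d-k)+1) = (b+1)+(d-k) by omega, mul_add]
      have e4 := ihb (d+1)
      rw [sum_range_succ] at e4
      simp only [Nat.sub_self, Nat.add_zero, Nat.choose_zero_right, mul_one] at e4
      rw [sum_range_succ, sum_congr rfl hsplit, sum_add_distrib, ihd]
      simp only [Nat.sub_self, Nat.add_zero, Nat.choose_zero_right, mul_one]
      rw [add_assoc, e4,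
        show a+(b+1)+d+1 = a+b+d+2 by omega,
        show a+b+(d+1)+1 = a+b+d+2 by omega,
        show a+(b+1)+(d+1)+1 = (a+b+d+2)+1 by omega,
        Nat.choose_succ_succ']
      have p1 := Nat.choose_succ_succ' (a+b+d+2) d
      have p2 := Nat.choose_succ_succ' (a+b+d+1) d
      rw [show a+b+d+1+1 = a+b+d+2 by omega] at p2
      rw [p1, p2]

lemma keyNat (a b d : ℕ) :
    ∑ k ∈ range (d+1), d.choose k * ((a+k).factorial * (b+d-k).factorial)
      = a.factorial * b.factorial * d.factorial * (a+b+d+1).choose d := by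
  have step : ∀ k ∈ range (d+1), d.choose k * ((a+k).factorial * (b+d-k).factorial)
      = a.factorial * b.factorial * d.factorial
        * ((a+k).choose k * (b + (d-k)).choose (d-k)) := by
    intro k hk
    rw [mem_range] at hk
    have hk' : k ≤ d := by omega
    have e1 : (a+k).factorial = (a+k).choose k * (k.factorial * a.factorial) := by
      have := Nat.choose_mul_factorial_mul_factorial (show k ≤ a+k by omega)
      rw [show a+k-k = a by omega] at this
      rw [← this]; ring
    have e2 : (b+d-k).factorial
        = (b+(d-k)).choose (d-k) * ((d-k).factorial * b.factorial) := by
      have := Nat.choose_mul_factorial_mul_factorial (show d-k ≤ b+(d-k) by omega)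
      rw [show b+(d-k)-(d-k) = b by omega] at this
      rw [show b+d-k = b+(d-k) by omega, ← this]; ring
    have e3 : d.factorial = d.choose k * (k.factorial * (d-k).factorial) := by
      have := Nat.choose_mul_factorial_mul_factorial hk'
      rw [← this]; ring
    rw [e1, e2, e3]; ring
  rw [sum_congr rfl step, ← mul_sum, vander]

lemma beta_nat (a c : ℕ) : (∫ x in (0:ℝ)..1, x^a * (1-x)^c) =
    (a.factorial * c.factorial : ℝ) / (a+c+1).factorial := by
  have h := beta_scaled a c (t := 1) one_pos
  simpa using h



/-- `I₁(α,β,γ,δ) = ∫₀¹ dτ₂ ∫₀^{τ₂} dτ₁ τ₁^α (1-τ₂)^β (τ₂-τ₁)^γ (1-τ₂+τ₁)^δ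
  = Γ(1+α)Γ(1+β)Γ(1+γ)Γ(2+α+β+δ) / (Γ(3+α+β+γ+δ)Γ(2+α+β))`. -/
theorem stmt_4 (α β γ δ : ℕ) :
    (∫ τ₂ in (0:ℝ)..1, ∫ τ₁ in (0:ℝ)..τ₂,
        τ₁ ^ α * (1 - τ₂) ^ β * (τ₂ - τ₁) ^ γ * (1 - τ₂ + τ₁) ^ δ) =
      Real.Gamma (1 + α) * Real.Gamma (1 + β) * Real.Gamma (1 + γ) *
          Real.Gamma (2 + α + β + δ) /
        (Real.Gamma (3 + α + β + γ + δ) * Real.Gamma (2 + α + β)) := by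
  -- Step 1: inner integral
  have inner_eq : ∀ t ∈ Set.uIcc (0:ℝ) 1,
      (∫ τ₁ in (0:ℝ)..t, τ₁ ^ α * (1 - t) ^ β * (t - τ₁) ^ γ * (1 - t + τ₁) ^ δ)
      = ∑ k ∈ range (δ+1), ((δ.choose k : ℝ) * (1-t)^(β+(δ-k)))
          * (t^(α+k+γ+1) * ((α+k).factorial * γ.factorial / (α+k+γ+1).factorial)) := by
    intro t ht
    rw [Set.uIcc_of_le (by norm_num : (0:ℝ) ≤ 1)] at ht
    have expand : ∀ x : ℝ, x ^ α * (1 - t) ^ β * (t - x) ^ γ * (1 - t + x) ^ δ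
        = ∑ k ∈ range (δ+1), ((δ.choose k : ℝ) * (1-t)^(β+(δ-k))) * (x^(α+k) * (t-x)^γ) := by
      intro x
      rw [show (1 - t + x) = x + (1 - t) by ring, add_pow, Finset.mul_sum]
      refine Finset.sum_congr rfl fun k hk => ?_
      rw [pow_add, pow_add]
      ring
    simp only [expand]
    rw [intervalIntegral.integral_finset_sum]
    · refine Finset.sum_congr rfl fun k hk => ?_
      rw [intervalIntegral.integral_const_mul]
      congr 1
      rcases ht.1.eq_or_lt with h0 | h0
      · rw [← h0]
        simp [zero_pow (by omega : α+k+γ+1 ≠ 0), intervalIntegral.integral_same]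
      · exact beta_scaled (α+k) γ h0
    · intro k hk
      exact (Continuous.intervalIntegrable (by fun_prop) _ _)
  rw [intervalIntegral.integral_congr inner_eq]
  -- Step 2: outer integral
  rw [intervalIntegral.integral_finset_sum (fun k hk =>
    (Continuous.intervalIntegrable (by fun_prop) _ _))]
  have outer : ∀ k ∈ range (δ+1),
      (∫ t in (0:ℝ)..1, ((δ.choose k : ℝ) * (1-t)^(β+(δ-k)))
          * (t^(α+k+γ+1) * ((α+k).factorial * γ.factorial / (α+k+γ+1).factorial)))
      = (γ.factorial / (α+β+γ+δ+2).factorial : ℝ)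
          * ((δ.choose k : ℕ) * ((α+k).factorial * (β+δ-k).factorial) : ℕ) := by
    intro k hk
    rw [mem_range] at hk
    have hkd : k ≤ δ := by omega
    have heq : ∀ t : ℝ, ((δ.choose k : ℝ) * (1-t)^(β+(δ-k)))
          * (t^(α+k+γ+1) * ((α+k).factorial * γ.factorial / (α+k+γ+1).factorial))
        = ((δ.choose k : ℝ) * ((α+k).factorial * γ.factorial / (α+k+γ+1).factorial))
          * (t^(α+k+γ+1) * (1-t)^(β+(δ-k))) := fun t => by ring
    simp only [heq]
    rw [intervalIntegral.integral_const_mul, beta_nat (α+k+γ+1) (β+(δ-k))]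
    rw [show (α+k+γ+1)+(β+(δ-k))+1 = α+β+γ+δ+2 by omega]
    rw [show β+(δ-k) = β+δ-k by omega]
    have h1 : ((α+k+γ+1).factorial : ℝ) ≠ 0 := by exact_mod_cast (α+k+γ+1).factorial_ne_zero
    have h2 : ((α+β+γ+δ+2).factorial : ℝ) ≠ 0 := by exact_mod_cast (α+β+γ+δ+2).factorial_ne_zero
    push_cast
    field_simp
  rw [Finset.sum_congr rfl outer, ← Finset.mul_sum]
  rw [← Nat.cast_sum]
  rw [keyNat α β δ]
  -- Step 3: Gamma values
  rw [show (1+(α:ℝ)) = (α:ℕ)+1 by ring, Real.Gamma_nat_eq_factorial,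
      show (1+(β:ℝ)) = (β:ℕ)+1 by ring, Real.Gamma_nat_eq_factorial,
      show (1+(γ:ℝ)) = (γ:ℕ)+1 by ring, Real.Gamma_nat_eq_factorial,
      show (2+(α:ℝ)+β+δ) = ((α+β+δ+1:ℕ):ℝ)+1 by push_cast; ring, Real.Gamma_nat_eq_factorial,
      show (3+(α:ℝ)+β+γ+δ) = ((α+β+γ+δ+2:ℕ):ℝ)+1 by push_cast; ring, Real.Gamma_nat_eq_factorial,
      show (2+(α:ℝ)+β) = ((α+β+1:ℕ):ℝ)+1 by push_cast; ring, Real.Gamma_nat_eq_factorial]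
  have hch := Nat.choose_mul_factorial_mul_factorial (show δ ≤ α+β+δ+1 by omega)
  rw [show α+β+δ+1-δ = α+β+1 by omega] at hch
  have h2 : ((α+β+γ+δ+2).factorial : ℝ) ≠ 0 := by exact_mod_cast (α+β+γ+δ+2).factorial_ne_zero
  have h3 : ((α+β+1).factorial : ℝ) ≠ 0 := by exact_mod_cast (α+β+1).factorial_ne_zero
  have hch' : ((α+β+δ+1).choose δ : ℝ) * δ.factorial * (α+β+1).factorial
      = (α+β+δ+1).factorial := by exact_mod_cast hch
  push_cast
  field_simp
  linear_combination hch'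
end
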